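/- Let f₁ = (a₁,b₁,c₁) and f₂ = (a₂,b₂,c₂) be real quadratic coefficient vectors with negative discriminants Δᵢ = bᵢ² - 4aᵢcᵢ < 0 and a₁, a₂ > 0, with complex roots α₁, α₂ in the upper half plane. Then the hyperbolic distance between the roots satisfies cosh d(α₁, α₂) = (2a₁c₂ + 2a₂c₁ - b₁b₂)/√((4a₁c₁ - b₁²)(4a₂c₂ - b₂²)). -/

import Mathlib

lemma root_parts (a b c : ℝ) (ha : 0 < a) (z : ℂ) (hz : 0 < z.im)
    (h : (a : ℂ) * z ^ 2 + (b : ℂ) * z + (c : ℂ) = 0) :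
    z.re = -b / (2 * a) ∧ z.im = Real.sqrt (4 * a * c - b ^ 2) / (2 * a) := by
  have him := congrArg Complex.im h
  have hre := congrArg Complex.re h
  simp [Complex.add_im, Complex.add_re, Complex.mul_im, Complex.mul_re, pow_two] at him hre
  have hzim : z.im ≠ 0 := ne_of_gt hz
  have hb : 2 * a * z.re + b = 0 := by
    have : z.im * (2 * a * z.re + b) = 0 := by linarith [him]
    rcases mul_eq_zero.mp this with h' | h'
    · exact absurd h' hzim
    · exact h'
  have hp : z.re = -b / (2 * a) := by field_simp; linarith
  have h2 : 4 * a * c - b ^ 2 = (2 * a * z.im) ^ 2 := by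
    linear_combination 4 * a * hre + (-b - 2 * a * z.re) * hb
  have hq2 : z.im ^ 2 = (Real.sqrt (4 * a * c - b ^ 2) / (2 * a)) ^ 2 := by
    rw [div_pow,
      Real.sq_sqrt (by nlinarith [sq_nonneg (2 * a * z.im)] : (0:ℝ) ≤ 4 * a * c - b ^ 2), h2]
    field_simp
  refine ⟨hp, ?_⟩
  have hnn : 0 ≤ Real.sqrt (4 * a * c - b ^ 2) / (2 * a) := by positivity
  calc z.im = Real.sqrt (z.im ^ 2) := (Real.sqrt_sq hz.le).symm
    _ = _ := by rw [hq2, Real.sqrt_sq hnn]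

lemma key_alg (a₁ b₁ c₁ a₂ b₂ c₂ s₁ s₂ : ℝ) (ha₁ : 0 < a₁) (ha₂ : 0 < a₂)
    (hs₁ : 0 < s₁) (hs₂ : 0 < s₂)
    (h1 : s₁ ^ 2 = 4 * a₁ * c₁ - b₁ ^ 2) (h2 : s₂ ^ 2 = 4 * a₂ * c₂ - b₂ ^ 2) :
    1 + ((-b₁ / (2 * a₁) - -b₂ / (2 * a₂)) ^ 2 + (s₁ / (2 * a₁) - s₂ / (2 * a₂)) ^ 2) /
        (2 * (s₁ / (2 * a₁)) * (s₂ / (2 * a₂))) =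
      (2 * a₁ * c₂ + 2 * a₂ * c₁ - b₁ * b₂) / (s₁ * s₂) := by
  field_simp
  ring_nf
  linear_combination a₂^2*h1 + a₁^2*h2

/-- The roots map is an isometry from the projective model given by the discriminant form
to the upper half plane: if `α₁, α₂` are the upper-half-plane roots of real quadratics
`(a₁,b₁,c₁)`, `(a₂,b₂,c₂)` with `aᵢ > 0` and negative discriminants, then
`cosh d(α₁,α₂) = (2a₁c₂ + 2a₂c₁ - b₁b₂)/√((4a₁c₁-b₁²)(4a₂c₂-b₂²))`. -/
theorem cosh_dist_roots_eq_discriminant_form (a₁ b₁ c₁ a₂ b₂ c₂ : ℝ)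
    (ha₁ : 0 < a₁) (ha₂ : 0 < a₂)
    (hd₁ : b₁ ^ 2 - 4 * a₁ * c₁ < 0) (hd₂ : b₂ ^ 2 - 4 * a₂ * c₂ < 0)
    (α₁ α₂ : UpperHalfPlane)
    (hroot₁ : (a₁ : ℂ) * (α₁ : ℂ) ^ 2 + (b₁ : ℂ) * (α₁ : ℂ) + (c₁ : ℂ) = 0)
    (hroot₂ : (a₂ : ℂ) * (α₂ : ℂ) ^ 2 + (b₂ : ℂ) * (α₂ : ℂ) + (c₂ : ℂ) = 0) :
    Real.cosh (dist α₁ α₂) =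
      (2 * a₁ * c₂ + 2 * a₂ * c₁ - b₁ * b₂) /
        Real.sqrt ((4 * a₁ * c₁ - b₁ ^ 2) * (4 * a₂ * c₂ - b₂ ^ 2)) := by
  obtain ⟨hp₁, hq₁⟩ := root_parts a₁ b₁ c₁ ha₁ (α₁ : ℂ) α₁.2 hroot₁
  obtain ⟨hp₂, hq₂⟩ := root_parts a₂ b₂ c₂ ha₂ (α₂ : ℂ) α₂.2 hroot₂
  have hD₁ : (0:ℝ) < 4 * a₁ * c₁ - b₁ ^ 2 := by linarith
  have hD₂ : (0:ℝ) < 4 * a₂ * c₂ - b₂ ^ 2 := by linarith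
  set s₁ := Real.sqrt (4 * a₁ * c₁ - b₁ ^ 2) with hs₁def
  set s₂ := Real.sqrt (4 * a₂ * c₂ - b₂ ^ 2) with hs₂def
  have hs₁ : 0 < s₁ := Real.sqrt_pos.mpr hD₁
  have hs₂ : 0 < s₂ := Real.sqrt_pos.mpr hD₂
  have h1 : s₁ ^ 2 = 4 * a₁ * c₁ - b₁ ^ 2 := Real.sq_sqrt hD₁.le
  have h2 : s₂ ^ 2 = 4 * a₂ * c₂ - b₂ ^ 2 := Real.sq_sqrt hD₂.le
  have hmul : Real.sqrt ((4 * a₁ * c₁ - b₁ ^ 2) * (4 * a₂ * c₂ - b₂ ^ 2)) = s₁ * s₂ :=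
    Real.sqrt_mul hD₁.le _
  rw [UpperHalfPlane.cosh_dist, hmul]
  have hdist : dist (α₁ : ℂ) (α₂ : ℂ) ^ 2 =
      ((α₁ : ℂ).re - (α₂ : ℂ).re) ^ 2 + ((α₁ : ℂ).im - (α₂ : ℂ).im) ^ 2 := by
    rw [Complex.dist_eq_re_im, Real.sq_sqrt (by positivity)]
  rw [hdist]
  have him₁ : α₁.im = (α₁ : ℂ).im := rfl
  have him₂ : α₂.im = (α₂ : ℂ).im := rfl
  rw [him₁, him₂, hp₁, hp₂, hq₁, hq₂]
  exact key_alg a₁ b₁ c₁ a₂ b₂ c₂ s₁ s₂ ha₁ ha₂ hs₁ hs₂ h1 h2
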